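/- arXiv:1507.02821 — 9 statements merged into one kernel-verified Lean document; each statement's English description precedes it below -/
import Mathlib

section
/- Let A ∈ ℂ^{M×N} be a dictionary with coherence μ_A and let x ∈ ℂ^N be nonzero. Then ‖A^H A x‖_∞ ≥ (1 − μ_A(δ(x) − 1)) · ‖x‖_∞. -/
open Matrix

/-- The δ-density of a vector `x ∈ ℂ^N`: the ratio of its ℓ¹-norm to its ℓ∞-norm
(the norm on `Fin N → ℂ` is the sup-norm); for `x = 0` this is `0/0 = 0`. -/
noncomputable def density {N : ℕ} (x : Fin N → ℂ) : ℝ :=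
  (∑ i, ‖x i‖) / ‖x‖

/-- The inner product `a_i^H b_j` between the `i`-th column of `A` and the `j`-th column of `B`. -/
noncomputable def colIP {M Na Nb : ℕ} (A : Matrix (Fin M) (Fin Na) ℂ)
    (B : Matrix (Fin M) (Fin Nb) ℂ) (i : Fin Na) (j : Fin Nb) : ℂ :=
  ∑ m, (starRingEnd ℂ) (A m i) * B m j

/-- A dictionary: all columns have unit Euclidean norm. -/
def UnitColumns {M N : ℕ} (A : Matrix (Fin M) (Fin N) ℂ) : Prop :=
  ∀ j, colIP A A j j = 1

/-- `μ` is the coherence of the dictionary `A`: the maximum of `|a_i^H a_j|` over `i ≠ j`. -/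
def IsCoherence {M N : ℕ} (A : Matrix (Fin M) (Fin N) ℂ) (μ : ℝ) : Prop :=
  IsGreatest {r : ℝ | ∃ i j, i ≠ j ∧ r = ‖colIP A A i j‖} μ

/-- `μ` is the mutual coherence of the dictionaries `A` and `B`:
the maximum of `|a_i^H b_j|` over all `i, j`. -/
def IsMutualCoherence {M Na Nb : ℕ} (A : Matrix (Fin M) (Fin Na) ℂ)
    (B : Matrix (Fin M) (Fin Nb) ℂ) (μ : ℝ) : Prop :=
  IsGreatest {r : ℝ | ∃ i j, r = ‖colIP A B i j‖} μ

theorem linf_lower_bound {M N : ℕ} (A : Matrix (Fin M) (Fin N) ℂ) (μ : ℝ)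
    (hA : UnitColumns A) (hμ : IsCoherence A μ) (x : Fin N → ℂ) (hx : x ≠ 0) :
    (1 - μ * (density x - 1)) * ‖x‖ ≤ ‖(Aᴴ * A).mulVec x‖ := by

  have hxnorm : (0:ℝ) < ‖x‖ := norm_pos_iff.mpr hx
  obtain ⟨⟨i0, j0, hij, hμeq⟩, hub⟩ := hμ
  have hμ0 : 0 ≤ μ := hμeq ▸ norm_nonneg _
  haveI : Nonempty (Fin N) := ⟨i0⟩
  obtain ⟨k, -, hk⟩ := Finset.exists_max_image Finset.univ (fun i => ‖x i‖)
    ⟨i0, Finset.mem_univ _⟩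
  have hknorm : ‖x‖ = ‖x k‖ := le_antisymm
    ((pi_norm_le_iff_of_nonneg (norm_nonneg _)).2 fun i => hk i (Finset.mem_univ i))
    (norm_le_pi_norm x k)
  have hentry : (Aᴴ * A).mulVec x k = ∑ j, colIP A A k j * x j := by
    simp [Matrix.mulVec, Matrix.mul_apply, colIP, dotProduct,
      Matrix.conjTranspose_apply, Finset.sum_mul]
  have hsplit : (Aᴴ * A).mulVec x k = x k + ∑ j ∈ Finset.univ \ {k}, colIP A A k j * x j := by
    rw [hentry, ← Finset.add_sum_erase _ _ (Finset.mem_univ k), hA k, one_mul,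
      Finset.sdiff_singleton_eq_erase]
  have hbound : ‖∑ j ∈ Finset.univ \ {k}, colIP A A k j * x j‖
      ≤ μ * ∑ j ∈ Finset.univ \ {k}, ‖x j‖ := by
    calc ‖∑ j ∈ Finset.univ \ {k}, colIP A A k j * x j‖
        ≤ ∑ j ∈ Finset.univ \ {k}, ‖colIP A A k j * x j‖ := norm_sum_le _ _
      _ ≤ ∑ j ∈ Finset.univ \ {k}, μ * ‖x j‖ := by
          refine Finset.sum_le_sum fun j hj => ?_
          rw [norm_mul]
          have hjk : j ≠ k := by
            simp only [Finset.mem_sdiff, Finset.mem_singleton] at hj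
            exact hj.2
          exact mul_le_mul_of_nonneg_right (hub ⟨k, j, Ne.symm hjk, rfl⟩) (norm_nonneg _)
      _ = μ * ∑ j ∈ Finset.univ \ {k}, ‖x j‖ := (Finset.mul_sum _ _ _).symm
  have hsum : ∑ j ∈ Finset.univ \ {k}, ‖x j‖ = (∑ j, ‖x j‖) - ‖x‖ := by
    rw [hknorm, Finset.sdiff_singleton_eq_erase, Finset.sum_erase_eq_sub (Finset.mem_univ k)]
  have h1 : ‖x k‖ - μ * ((∑ j, ‖x j‖) - ‖x‖) ≤ ‖(Aᴴ * A).mulVec x k‖ := by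
    rw [hsplit, ← hsum]
    calc ‖x k‖ - μ * ∑ j ∈ Finset.univ \ {k}, ‖x j‖
        ≤ ‖x k‖ - ‖∑ j ∈ Finset.univ \ {k}, colIP A A k j * x j‖ := by linarith
      _ ≤ ‖x k + ∑ j ∈ Finset.univ \ {k}, colIP A A k j * x j‖ := by
          have h := norm_sub_le (x k + ∑ j ∈ Finset.univ \ {k}, colIP A A k j * x j)
            (∑ j ∈ Finset.univ \ {k}, colIP A A k j * x j)
          rw [add_sub_cancel_right] at h
          linarith
  have h2 : ‖(Aᴴ * A).mulVec x k‖ ≤ ‖(Aᴴ * A).mulVec x‖ := norm_le_pi_norm _ k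
  have heq : (1 - μ * (density x - 1)) * ‖x‖ = ‖x k‖ - μ * ((∑ j, ‖x j‖) - ‖x‖) := by
    rw [← hknorm, density]
    field_simp
  linarith
end

section
/- Let A ∈ ℂ^{M×N} be a dictionary with coherence μ_A and let x ∈ ℂ^N be nonzero. Then ‖A^H A x‖_∞ ≤ (1 + μ_A(δ(x) − 1)) · ‖x‖_∞. -/
open Matrix

lemma colIP_eq_inner {M N : ℕ} (A : Matrix (Fin M) (Fin N) ℂ) (i j : Fin N) :
    colIP A A i j = @inner ℂ (EuclideanSpace ℂ (Fin M)) _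
      ((EuclideanSpace.equiv (Fin M) ℂ).symm (fun m => A m i))
      ((EuclideanSpace.equiv (Fin M) ℂ).symm (fun m => A m j)) := by
  simp [colIP, PiLp.inner_apply, RCLike.inner_apply]
  exact Finset.sum_congr rfl fun m _ => mul_comm _ _

lemma coherence_le_one {M N : ℕ} (A : Matrix (Fin M) (Fin N) ℂ) (μ : ℝ)
    (hA : UnitColumns A) (hμ : IsCoherence A μ) : μ ≤ 1 := by
  obtain ⟨i, j, hij, h⟩ := hμ.1
  have hn : ∀ k : Fin N,
      ‖(EuclideanSpace.equiv (Fin M) ℂ).symm (fun m => A m k)‖ = 1 := by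
    intro k
    have h1 := hA k
    rw [colIP_eq_inner] at h1
    have := inner_self_eq_norm_sq_to_K (𝕜 := ℂ)
      (x := (EuclideanSpace.equiv (Fin M) ℂ).symm (fun m => A m k))
    rw [this] at h1
    have h2 : (‖(EuclideanSpace.equiv (Fin M) ℂ).symm (fun m => A m k)‖ : ℝ) ^ 2 = 1 := by
      rw [← RCLike.ofReal_pow, ← RCLike.ofReal_one, RCLike.ofReal_inj] at h1
      exact h1
    nlinarith [norm_nonneg ((EuclideanSpace.equiv (Fin M) ℂ).symm (fun m => A m k))]
  rw [h, colIP_eq_inner]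
  calc ‖_‖ ≤ _ * _ := norm_inner_le_norm _ _
    _ = 1 := by rw [hn i, hn j]; ring

theorem linf_upper_bound {M N : ℕ} (A : Matrix (Fin M) (Fin N) ℂ) (μ : ℝ)
    (hA : UnitColumns A) (hμ : IsCoherence A μ) (x : Fin N → ℂ) (hx : x ≠ 0) :
    ‖(Aᴴ * A).mulVec x‖ ≤ (1 + μ * (density x - 1)) * ‖x‖ := by
  set t := ‖x‖ with ht
  set s := ∑ i, ‖x i‖ with hs
  have ht0 : 0 < t := norm_pos_iff.mpr hx
  have hxt : ∀ i, ‖x i‖ ≤ t := fun i => norm_le_pi_norm x i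
  have hts : t ≤ s := by
    rw [ht]
    refine (pi_norm_le_iff_of_nonneg (Finset.sum_nonneg fun j _ => norm_nonneg _)).mpr ?_
    intro i
    exact Finset.single_le_sum (fun j _ => norm_nonneg (x j)) (Finset.mem_univ i)
  have hμ0 : 0 ≤ μ := by
    obtain ⟨i, j, hij, h⟩ := hμ.1
    rw [h]; positivity
  have hμ1 : μ ≤ 1 := coherence_le_one A μ hA hμ
  have entry : ∀ i, (Aᴴ * A).mulVec x i = ∑ j, colIP A A i j * x j := by
    intro i
    simp [mulVec, dotProduct, Matrix.mul_apply, colIP, conjTranspose_apply, Finset.sum_mul]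
  have key : ∀ i, ‖(Aᴴ * A).mulVec x i‖ ≤ t + μ * (s - t) := by
    intro i
    rw [entry i]
    calc ‖∑ j, colIP A A i j * x j‖ ≤ ∑ j, ‖colIP A A i j * x j‖ := norm_sum_le _ _
      _ = ‖colIP A A i i * x i‖ + ∑ j ∈ Finset.univ.erase i, ‖colIP A A i j * x j‖ := by
          rw [← Finset.add_sum_erase _ _ (Finset.mem_univ i)]
      _ ≤ ‖x i‖ + μ * (s - ‖x i‖) := by
          have h1 : ‖colIP A A i i * x i‖ = ‖x i‖ := by rw [hA i, one_mul]
          have h2 : ∑ j ∈ Finset.univ.erase i, ‖colIP A A i j * x j‖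
              ≤ ∑ j ∈ Finset.univ.erase i, μ * ‖x j‖ := by
            refine Finset.sum_le_sum fun j hj => ?_
            rw [norm_mul]
            have hji : i ≠ j := fun h => (Finset.mem_erase.mp hj).1 h.symm
            have : ‖colIP A A i j‖ ≤ μ := hμ.2 ⟨i, j, hji, rfl⟩
            exact mul_le_mul_of_nonneg_right this (norm_nonneg _)
          have h3 : ∑ j ∈ Finset.univ.erase i, μ * ‖x j‖ = μ * (s - ‖x i‖) := by
            rw [← Finset.mul_sum, hs, ← Finset.add_sum_erase _ _ (Finset.mem_univ i)]
            ring
          linarith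
      _ ≤ t + μ * (s - t) := by nlinarith [hxt i]
  have hb : ‖(Aᴴ * A).mulVec x‖ ≤ t + μ * (s - t) := by
    refine (pi_norm_le_iff_of_nonneg ?_).mpr key
    nlinarith
  have : (1 + μ * (density x - 1)) * t = t + μ * (s - t) := by
    rw [density, ← ht, ← hs]
    field_simp
    try ring
  linarith
end

section
/- (Kernel result) Let A ∈ ℂ^{M×N} be a dictionary with coherence μ_A ≠ 0 and let x ∈ ℂ^N be nonzero. If δ(x) < 1 + 1/μ_A, then x is not in the kernel of A, i.e., A x ≠ 0. -/
open Matrix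

theorem kernel_result {M N : ℕ} (A : Matrix (Fin M) (Fin N) ℂ) (μ : ℝ)
    (hA : UnitColumns A) (hμ : IsCoherence A μ) (hμ0 : μ ≠ 0)
    (x : Fin N → ℂ) (hx : x ≠ 0) (hδ : density x < 1 + 1 / μ) :
    A.mulVec x ≠ 0 := by
  intro h
  obtain ⟨i0, j0, hij, hval⟩ := hμ.1
  have hμnn : 0 ≤ μ := hval ▸ norm_nonneg _
  have hμpos : 0 < μ := lt_of_le_of_ne hμnn (Ne.symm hμ0)
  have hN : Nonempty (Fin N) := ⟨i0⟩
  -- Gram system: for every i, ∑ j, colIP A A i j * x j = 0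
  have key : ∀ i, ∑ j, colIP A A i j * x j = 0 := by
    intro i
    have : ∑ j, colIP A A i j * x j
        = ∑ m, (starRingEnd ℂ) (A m i) * (A.mulVec x m) := by
      simp only [colIP, mulVec, dotProduct, Finset.sum_mul, Finset.mul_sum]
      rw [Finset.sum_comm]
      simp [mul_assoc]
    rw [this, h]
    simp
  -- choose i maximizing ‖x i‖
  obtain ⟨i, -, hi⟩ := Finset.exists_mem_eq_sup' (Finset.univ_nonempty (α := Fin N))
    (fun j => ‖x j‖)
  have hsup : ‖x‖ = ‖x i‖ :=
    le_antisymm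
      ((pi_norm_le_iff_of_nonneg (norm_nonneg _)).mpr fun j =>
        hi ▸ Finset.le_sup' (fun j => ‖x j‖) (Finset.mem_univ j))
      (norm_le_pi_norm x i)
  have hxnorm : 0 < ‖x‖ := norm_pos_iff.mpr hx
  -- x i = - ∑_{j ≠ i} colIP * x j
  have heq : x i = -∑ j ∈ Finset.univ.erase i, colIP A A i j * x j := by
    have := key i
    rw [← Finset.add_sum_erase _ _ (Finset.mem_univ i)] at this
    rw [hA i, one_mul] at this
    exact eq_neg_of_add_eq_zero_left this
  have hbound : ‖x i‖ ≤ μ * ((∑ j, ‖x j‖) - ‖x i‖) := by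
    calc ‖x i‖ = ‖∑ j ∈ Finset.univ.erase i, colIP A A i j * x j‖ := by
          rw [heq, norm_neg]
      _ ≤ ∑ j ∈ Finset.univ.erase i, ‖colIP A A i j * x j‖ := norm_sum_le _ _
      _ ≤ ∑ j ∈ Finset.univ.erase i, μ * ‖x j‖ := by
          apply Finset.sum_le_sum
          intro j hj
          rw [norm_mul]
          apply mul_le_mul_of_nonneg_right _ (norm_nonneg _)
          exact hμ.2 ⟨i, j, (Finset.ne_of_mem_erase hj).symm, rfl⟩
      _ = μ * ((∑ j, ‖x j‖) - ‖x i‖) := by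
          rw [mul_sub, Finset.mul_sum,
            ← Finset.add_sum_erase _ (fun j => μ * ‖x j‖) (Finset.mem_univ i)]
          ring
  -- conclude
  have hS : (∑ j, ‖x j‖) < (1 + 1 / μ) * ‖x i‖ := by
    rw [density, hsup, div_lt_iff₀ (hsup ▸ hxnorm)] at hδ
    exact hδ
  have h1 : (1 + μ) * ‖x i‖ ≤ μ * ∑ j, ‖x j‖ := by nlinarith
  have h2 : μ * ((1 + 1 / μ) * ‖x i‖) = (1 + μ) * ‖x i‖ := by
    have hm : μ * (1 + 1 / μ) = 1 + μ := by
      field_simp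
      ring
    rw [← mul_assoc, hm]
  have h3 : μ * (∑ j, ‖x j‖) < μ * ((1 + 1 / μ) * ‖x i‖) :=
    mul_lt_mul_of_pos_left hS hμpos
  linarith
end

section
/- Let A ∈ ℂ^{M×N} be a dictionary with coherence μ_A ≠ 0 and let x ∈ ℝ^N be the α-decaying signal with entries x_i = α^{i−1} for i = 1,…,N, where 0 < α < 1 − (1 + 1/μ_A)^{−1}. Then A x ≠ 0, even though x has all N entries nonzero. -/
open Matrix Finset

theorem kernel_result_alpha_decaying {M N : ℕ} (A : Matrix (Fin M) (Fin N) ℂ) (μ : ℝ)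
    (hA : UnitColumns A) (hμ : IsCoherence A μ) (hμ0 : μ ≠ 0)
    (α : ℝ) (hα0 : 0 < α) (hα1 : α < 1 - (1 + 1 / μ)⁻¹)
    (x : Fin N → ℂ) (hx : ∀ i : Fin N, x i = ((α ^ (i : ℕ) : ℝ) : ℂ)) :
    A.mulVec x ≠ 0 ∧ ∀ i, x i ≠ 0 := by
  have hμpos : 0 < μ := by
    obtain ⟨⟨i, j, hij, hr⟩, _⟩ := hμ
    have h0 : 0 ≤ μ := hr ▸ norm_nonneg _
    exact lt_of_le_of_ne h0 (Ne.symm hμ0)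
  have hxne : ∀ i, x i ≠ 0 := by
    intro i
    rw [hx i]
    exact_mod_cast pow_ne_zero _ (ne_of_gt hα0)
  refine ⟨?_, hxne⟩
  intro hzero
  obtain ⟨⟨i0, j0, hij, _⟩, hub⟩ := hμ
  have hN : 0 < N := i0.pos
  set j : Fin N := ⟨0, hN⟩ with hj
  -- key kernel identity
  have h0 : ∑ i, colIP A A j i * x i = 0 := by
    calc ∑ i, colIP A A j i * x i
        = ∑ i, ∑ m, (starRingEnd ℂ) (A m j) * A m i * x i := by
          simp [colIP, Finset.sum_mul]
      _ = ∑ m, (starRingEnd ℂ) (A m j) * (∑ i, A m i * x i) := by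
          rw [Finset.sum_comm]
          simp [Finset.mul_sum, mul_assoc]
      _ = 0 := by
          have hm : ∀ m, ∑ i, A m i * x i = 0 := by
            intro m
            have := congrFun hzero m
            simpa [Matrix.mulVec, dotProduct] using this
          simp [hm]
  have hsplit : colIP A A j j * x j + ∑ i ∈ univ.erase j, colIP A A j i * x i
      = ∑ i, colIP A A j i * x i :=
    Finset.add_sum_erase _ (fun i => colIP A A j i * x i) (Finset.mem_univ j)
  rw [hA j, one_mul, h0] at hsplit
  have hxj : x j = - ∑ i ∈ univ.erase j, colIP A A j i * x i :=
    eq_neg_of_add_eq_zero_left hsplit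
  -- norms
  have hnormj : ‖x j‖ = 1 := by
    rw [hx j]
    simp [hj]
  have hbound : ‖x j‖ ≤ μ * ((∑ i, ‖x i‖) - ‖x j‖) := by
    calc ‖x j‖ = ‖∑ i ∈ univ.erase j, colIP A A j i * x i‖ := by rw [hxj, norm_neg]
      _ ≤ ∑ i ∈ univ.erase j, ‖colIP A A j i * x i‖ := norm_sum_le _ _
      _ ≤ ∑ i ∈ univ.erase j, μ * ‖x i‖ := by
          refine Finset.sum_le_sum fun i hi => ?_
          rw [norm_mul]
          have hji : j ≠ i := (Finset.ne_of_mem_erase hi).symm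
          exact mul_le_mul_of_nonneg_right (hub ⟨j, i, hji, rfl⟩) (norm_nonneg _)
      _ = μ * ((∑ i, ‖x i‖) - ‖x j‖) := by
          rw [← Finset.mul_sum, Finset.sum_erase_eq_sub (Finset.mem_univ j)]
  -- sum of norms is geometric
  have hS : (∑ i, ‖x i‖) = ∑ i ∈ Finset.range N, α ^ i := by
    rw [← Fin.sum_univ_eq_sum_range]
    refine Finset.sum_congr rfl fun i _ => ?_
    rw [hx i]
    simp [abs_of_pos hα0]
  have hα1' : α < 1 := by
    have : 0 < (1 + 1 / μ)⁻¹ := by positivity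
    linarith
  have hgeom : ∑ i ∈ Finset.range N, α ^ i < 1 + 1 / μ := by
    have h1 : ∑ i ∈ Finset.range N, α ^ i = (1 - α ^ N) / (1 - α) := by
      rw [geom_sum_eq (ne_of_lt hα1'),
        div_eq_div_iff (by linarith : α - 1 < 0).ne (by linarith : (0:ℝ) < 1 - α).ne']
      ring
    have hαN : 0 < α ^ N := pow_pos hα0 N
    have h1α : 0 < 1 - α := by linarith
    rw [h1]
    rw [div_lt_iff₀ h1α]
    have key : (1 + 1 / μ)⁻¹ < 1 - α := by linarith
    have hμ' : 0 < 1 + 1 / μ := by positivity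
    have h2 : 1 < (1 + 1 / μ) * (1 - α) := by
      nlinarith [mul_lt_mul_of_pos_left key hμ', mul_inv_cancel₀ (ne_of_gt hμ')]
    linarith
  rw [hnormj, hS] at hbound
  have hfin : μ * ((∑ i ∈ Finset.range N, α ^ i) - 1) < 1 := by
    have h2 : μ * ((∑ i ∈ Finset.range N, α ^ i) - 1) < μ * (1 / μ) := by
      apply mul_lt_mul_of_pos_left _ hμpos
      linarith
    rwa [mul_one_div, div_self hμ0] at h2
  linarith
end

section
/- (Uncertainty relation) Let A ∈ ℂ^{M×N_a} and B ∈ ℂ^{M×N_b} be dictionaries with coherences μ_A, μ_B and mutual coherence μ_m. Let x ∈ ℂ^{N_a} and z ∈ ℂ^{N_b} be nonzero vectors satisfying A x = B z. Then [1 − μ_A(δ(x) − 1)]⁺ · [1 − μ_B(δ(z) − 1)]⁺ ≤ δ(x) · δ(z) · μ_m², where [u]⁺ := max{u, 0}. -/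
open Matrix

lemma colIP_expand {M Na Nc : ℕ} (A : Matrix (Fin M) (Fin Na) ℂ)
    (C : Matrix (Fin M) (Fin Nc) ℂ) (y : Fin Nc → ℂ) (i : Fin Na) :
    ∑ j, colIP A C i j * y j = ∑ m, (starRingEnd ℂ) (A m i) * (C.mulVec y m) := by
  simp only [colIP, Finset.sum_mul, Matrix.mulVec, dotProduct, Finset.mul_sum, mul_assoc]
  exact Finset.sum_comm

lemma colIP_swap {M Na Nb : ℕ} (A : Matrix (Fin M) (Fin Na) ℂ)
    (B : Matrix (Fin M) (Fin Nb) ℂ) (i : Fin Na) (j : Fin Nb) :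
    colIP B A j i = (starRingEnd ℂ) (colIP A B i j) := by
  rw [colIP, colIP, map_sum]
  refine Finset.sum_congr rfl fun m _ => ?_
  rw [_root_.map_mul, Complex.conj_conj]
  ring

lemma side_bound {M Na Nb : ℕ} (A : Matrix (Fin M) (Fin Na) ℂ)
    (B : Matrix (Fin M) (Fin Nb) ℂ) (μa μm : ℝ)
    (hA : UnitColumns A) (hμa0 : 0 ≤ μa)
    (hμa : ∀ i j : Fin Na, i ≠ j → ‖colIP A A i j‖ ≤ μa)
    (hμm : ∀ (i : Fin Na) (j : Fin Nb), ‖colIP A B i j‖ ≤ μm)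
    (x : Fin Na → ℂ) (z : Fin Nb → ℂ) (hx : x ≠ 0)
    (hxz : A.mulVec x = B.mulVec z) :
    ‖x‖ - μa * ((∑ i, ‖x i‖) - ‖x‖) ≤ μm * ∑ j, ‖z j‖ := by
  have hNa : Nonempty (Fin Na) := by
    rcases Nat.eq_zero_or_pos Na with h | h
    · subst h; exact absurd (Subsingleton.elim x 0) hx
    · exact ⟨⟨0, h⟩⟩
  obtain ⟨i0, -, hi0⟩ := Finset.exists_max_image Finset.univ (fun i => ‖x i‖)
    Finset.univ_nonempty
  have hnx : ‖x‖ = ‖x i0‖ := by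
    refine le_antisymm ?_ (norm_le_pi_norm x i0)
    exact (pi_norm_le_iff_of_nonneg (norm_nonneg _)).mpr fun i => hi0 i (Finset.mem_univ i)
  -- key identity at i0
  have key : ∑ j, colIP A A i0 j * x j = ∑ j, colIP A B i0 j * z j := by
    rw [colIP_expand, colIP_expand, hxz]
  have hsplit : ∑ j, colIP A A i0 j * x j
      = x i0 + ∑ j ∈ Finset.univ.erase i0, colIP A A i0 j * x j := by
    rw [← Finset.add_sum_erase _ _ (Finset.mem_univ i0), hA i0, one_mul]
  set R := ∑ j ∈ Finset.univ.erase i0, colIP A A i0 j * x j with hR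
  have hRle : ‖R‖ ≤ μa * ((∑ i, ‖x i‖) - ‖x i0‖) := by
    calc ‖R‖ ≤ ∑ j ∈ Finset.univ.erase i0, ‖colIP A A i0 j * x j‖ := norm_sum_le _ _
      _ ≤ ∑ j ∈ Finset.univ.erase i0, μa * ‖x j‖ := by
          refine Finset.sum_le_sum fun j hj => ?_
          rw [norm_mul]
          exact mul_le_mul_of_nonneg_right
            (hμa i0 j (Ne.symm (Finset.ne_of_mem_erase hj))) (norm_nonneg _)
      _ = μa * ∑ j ∈ Finset.univ.erase i0, ‖x j‖ := by rw [Finset.mul_sum]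
      _ = μa * ((∑ i, ‖x i‖) - ‖x i0‖) := by
          rw [Finset.sum_erase_eq_sub (Finset.mem_univ i0)]
  have hTle : ‖∑ j, colIP A B i0 j * z j‖ ≤ μm * ∑ j, ‖z j‖ := by
    calc ‖∑ j, colIP A B i0 j * z j‖ ≤ ∑ j, ‖colIP A B i0 j * z j‖ := norm_sum_le _ _
      _ ≤ ∑ j, μm * ‖z j‖ := by
          refine Finset.sum_le_sum fun j _ => ?_
          rw [norm_mul]
          exact mul_le_mul_of_nonneg_right (hμm i0 j) (norm_nonneg _)
      _ = μm * ∑ j, ‖z j‖ := by rw [Finset.mul_sum]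
  have hxi0 : ‖x i0‖ ≤ ‖∑ j, colIP A B i0 j * z j‖ + ‖R‖ := by
    have : x i0 = (∑ j, colIP A B i0 j * z j) - R := by
      rw [← key, hsplit]; ring
    rw [this]
    exact norm_sub_le _ _
  rw [hnx]
  linarith

theorem uncertainty_relation {M Na Nb : ℕ} (A : Matrix (Fin M) (Fin Na) ℂ)
    (B : Matrix (Fin M) (Fin Nb) ℂ) (μa μb μm : ℝ)
    (hA : UnitColumns A) (hB : UnitColumns B)
    (hμa : IsCoherence A μa) (hμb : IsCoherence B μb) (hμm : IsMutualCoherence A B μm)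
    (x : Fin Na → ℂ) (z : Fin Nb → ℂ) (hx : x ≠ 0) (hz : z ≠ 0)
    (hxz : A.mulVec x = B.mulVec z) :
    max (1 - μa * (density x - 1)) 0 * max (1 - μb * (density z - 1)) 0 ≤
      density x * density z * μm ^ 2 := by
  have hμa0 : 0 ≤ μa := by obtain ⟨i, j, -, h⟩ := hμa.1; rw [h]; exact norm_nonneg _
  have hμb0 : 0 ≤ μb := by obtain ⟨i, j, -, h⟩ := hμb.1; rw [h]; exact norm_nonneg _
  have hμm0 : 0 ≤ μm := by obtain ⟨i, j, h⟩ := hμm.1; rw [h]; exact norm_nonneg _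
  have hμmBA : ∀ (j : Fin Nb) (i : Fin Na), ‖colIP B A j i‖ ≤ μm := fun j i => by
    rw [colIP_swap, RCLike.norm_conj]
    exact hμm.2 ⟨i, j, rfl⟩
  have h1 := side_bound A B μa μm hA hμa0 (fun i j hij => hμa.2 ⟨i, j, hij, rfl⟩)
    (fun i j => hμm.2 ⟨i, j, rfl⟩) x z hx hxz
  have h2 := side_bound B A μb μm hB hμb0 (fun i j hij => hμb.2 ⟨i, j, hij, rfl⟩)
    hμmBA z x hz hxz.symm
  have hnx : (0 : ℝ) < ‖x‖ := norm_pos_iff.mpr hx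
  have hnz : (0 : ℝ) < ‖z‖ := norm_pos_iff.mpr hz
  have hSx : (0 : ℝ) ≤ ∑ i, ‖x i‖ := Finset.sum_nonneg fun i _ => norm_nonneg _
  have hSz : (0 : ℝ) ≤ ∑ j, ‖z j‖ := Finset.sum_nonneg fun j _ => norm_nonneg _
  have h1' : max (1 - μa * (density x - 1)) 0 ≤ μm * (∑ j, ‖z j‖) / ‖x‖ := by
    apply max_le
    · rw [le_div_iff₀ hnx]
      have heq : (1 - μa * (density x - 1)) * ‖x‖
          = ‖x‖ - μa * ((∑ i, ‖x i‖) - ‖x‖) := by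
        unfold density; field_simp
      rw [heq]; exact h1
    · positivity
  have h2' : max (1 - μb * (density z - 1)) 0 ≤ μm * (∑ i, ‖x i‖) / ‖z‖ := by
    apply max_le
    · rw [le_div_iff₀ hnz]
      have heq : (1 - μb * (density z - 1)) * ‖z‖
          = ‖z‖ - μb * ((∑ j, ‖z j‖) - ‖z‖) := by
        unfold density; field_simp
      rw [heq]; exact h2
    · positivity
  calc max (1 - μa * (density x - 1)) 0 * max (1 - μb * (density z - 1)) 0
      ≤ (μm * (∑ j, ‖z j‖) / ‖x‖) * (μm * (∑ i, ‖x i‖) / ‖z‖) :=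
        mul_le_mul h1' h2' (le_max_right _ _) (by positivity)
    _ = density x * density z * μm ^ 2 := by
        unfold density; field_simp
end

section
/- Let A, B ∈ ℂ^{M×M} be unitary matrices (a pair of orthonormal bases) with mutual coherence μ_m, and let x, z ∈ ℂ^M be nonzero vectors satisfying A x = B z. Then 1/μ_m² ≤ δ(x) · δ(z). -/
open Matrix

theorem uncertainty_relation_onb_pair {M : ℕ} (A B : Matrix (Fin M) (Fin M) ℂ)
    (hA : A ∈ Matrix.unitaryGroup (Fin M) ℂ) (hB : B ∈ Matrix.unitaryGroup (Fin M) ℂ)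
    (μm : ℝ) (hμm : IsMutualCoherence A B μm)
    (x z : Fin M → ℂ) (hx : x ≠ 0) (hz : z ≠ 0)
    (hxz : A.mulVec x = B.mulVec z) :
    1 / μm ^ 2 ≤ density x * density z := by
  classical
  -- basic positivity
  have hnx : (0:ℝ) < ‖x‖ := by simpa [norm_pos_iff] using hx
  have hnz : (0:ℝ) < ‖z‖ := by simpa [norm_pos_iff] using hz
  obtain ⟨i0, hi0⟩ := Function.ne_iff.mp hx
  have hSx : (0:ℝ) < ∑ i, ‖x i‖ :=
    Finset.sum_pos' (fun i _ => norm_nonneg _) ⟨i0, Finset.mem_univ _, by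
      simpa [norm_pos_iff] using hi0⟩
  obtain ⟨j0, hj0⟩ := Function.ne_iff.mp hz
  have hSz : (0:ℝ) < ∑ j, ‖z j‖ :=
    Finset.sum_pos' (fun j _ => norm_nonneg _) ⟨j0, Finset.mem_univ _, by
      simpa [norm_pos_iff] using hj0⟩
  have hμ_nn : 0 ≤ μm := le_trans (norm_nonneg (colIP A B i0 j0)) (hμm.2 ⟨i0, j0, rfl⟩)
  have hbound : ∀ i j, ‖colIP A B i j‖ ≤ μm := fun i j => hμm.2 ⟨i, j, rfl⟩
  -- z = Bᴴ A x
  have hz_eq : z = (star B * A).mulVec x := by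
    have h1 : (star B * A).mulVec x = (star B * B).mulVec z := by
      rw [← Matrix.mulVec_mulVec, ← Matrix.mulVec_mulVec, hxz]
    rw [h1, hB.1, Matrix.one_mulVec]
  -- x = Aᴴ B z
  have hx_eq : x = (star A * B).mulVec z := by
    have h1 : (star A * B).mulVec z = (star A * A).mulVec x := by
      rw [← Matrix.mulVec_mulVec, ← Matrix.mulVec_mulVec, hxz]
    rw [h1, hA.1, Matrix.one_mulVec]
  -- entrywise bounds
  have hzb : ∀ j, ‖z j‖ ≤ μm * ∑ i, ‖x i‖ := by
    intro j
    have hentry : ∀ i, (star B * A) j i = star (colIP A B i j) := by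
      intro i
      simp only [Matrix.mul_apply, Matrix.star_apply, colIP, star_sum, starRingEnd_apply]
      exact Finset.sum_congr rfl fun m _ => by rw [StarMul.star_mul, star_star]
    calc ‖z j‖ = ‖∑ i, (star B * A) j i * x i‖ := by
          rw [hz_eq]; rfl
      _ ≤ ∑ i, ‖(star B * A) j i * x i‖ := norm_sum_le _ _
      _ ≤ ∑ i, μm * ‖x i‖ := by
          refine Finset.sum_le_sum fun i _ => ?_
          rw [norm_mul]
          exact mul_le_mul_of_nonneg_right (by rw [hentry i, norm_star]; exact hbound i j)
            (norm_nonneg _)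
      _ = μm * ∑ i, ‖x i‖ := by rw [Finset.mul_sum]
  have hxb : ∀ i, ‖x i‖ ≤ μm * ∑ j, ‖z j‖ := by
    intro i
    have hentry : ∀ j, (star A * B) i j = colIP A B i j := by
      intro j
      simp only [Matrix.mul_apply, Matrix.star_apply, colIP, starRingEnd_apply]
    calc ‖x i‖ = ‖∑ j, (star A * B) i j * z j‖ := by
          rw [hx_eq]; rfl
      _ ≤ ∑ j, ‖(star A * B) i j * z j‖ := norm_sum_le _ _
      _ ≤ ∑ j, μm * ‖z j‖ := by
          refine Finset.sum_le_sum fun j _ => ?_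
          rw [norm_mul]
          exact mul_le_mul_of_nonneg_right (by rw [hentry j]; exact hbound i j)
            (norm_nonneg _)
      _ = μm * ∑ j, ‖z j‖ := by rw [Finset.mul_sum]
  -- sup-norm bounds
  have hnz_le : ‖z‖ ≤ μm * ∑ i, ‖x i‖ :=
    (pi_norm_le_iff_of_nonneg (by positivity)).mpr hzb
  have hnx_le : ‖x‖ ≤ μm * ∑ j, ‖z j‖ :=
    (pi_norm_le_iff_of_nonneg (by positivity)).mpr hxb
  have hμ_pos : 0 < μm := by nlinarith
  -- final computation
  rw [density, density, div_mul_div_comm, div_le_div_iff₀ (by positivity) (by positivity)]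
  nlinarith [mul_le_mul hnx_le hnz_le (le_of_lt hnz) (by positivity : (0:ℝ) ≤ μm * ∑ j, ‖z j‖),
    mul_pos hSx hSz]
end

section
/- Let A, B ∈ ℂ^{M×M} be unitary matrices whose mutual coherence equals μ_m = 1/√M (maximally incoherent orthonormal bases), and let x, z ∈ ℂ^M be nonzero vectors satisfying A x = B z. Then M ≤ δ(x) · δ(z). -/
open Matrix

theorem uncertainty_relation_max_incoherent_onb_pair {M : ℕ} (A B : Matrix (Fin M) (Fin M) ℂ)
    (hA : A ∈ Matrix.unitaryGroup (Fin M) ℂ) (hB : B ∈ Matrix.unitaryGroup (Fin M) ℂ)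
    (hμm : IsMutualCoherence A B (1 / Real.sqrt M))
    (x z : Fin M → ℂ) (hx : x ≠ 0) (hz : z ≠ 0)
    (hxz : A.mulVec x = B.mulVec z) :
    (M : ℝ) ≤ density x * density z := by
  -- M > 0
  have hM : 0 < M := by
    rcases Nat.eq_zero_or_pos M with h | h
    · exact absurd (funext fun i => absurd (h ▸ i).isLt (by simp)) hx
    · exact h
  have hMR : (0:ℝ) < M := by exact_mod_cast hM
  have hsM : (0:ℝ) < Real.sqrt M := Real.sqrt_pos.mpr hMR
  -- coherence bound
  have hcoh : ∀ i j, ‖colIP A B i j‖ ≤ 1 / Real.sqrt M := fun i j =>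
    hμm.2 ⟨i, j, rfl⟩
  -- x in terms of z
  have hxe : ∀ i, x i = ∑ j, colIP A B i j * z j := by
    intro i
    have h : (star A * B).mulVec z = x := by
      rw [← Matrix.mulVec_mulVec, ← hxz, Matrix.mulVec_mulVec, hA.1, Matrix.one_mulVec]
    rw [← h]
    simp [Matrix.mulVec, dotProduct, Matrix.mul_apply, colIP, Matrix.star_apply,
      Complex.star_def, Finset.sum_mul]
  have hze : ∀ j, z j = ∑ i, colIP B A j i * x i := by
    intro j
    have h : (star B * A).mulVec x = z := by
      rw [← Matrix.mulVec_mulVec, hxz, Matrix.mulVec_mulVec, hB.1, Matrix.one_mulVec]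
    rw [← h]
    simp [Matrix.mulVec, dotProduct, Matrix.mul_apply, colIP, Matrix.star_apply,
      Complex.star_def, Finset.sum_mul]
  have hsym : ∀ i j, ‖colIP B A j i‖ = ‖colIP A B i j‖ := by
    intro i j
    have : colIP B A j i = starRingEnd ℂ (colIP A B i j) := by
      simp [colIP, map_sum, _root_.map_mul, mul_comm]
    rw [this, RCLike.norm_conj]
  set Sx := ∑ i, ‖x i‖ with hSx
  set Sz := ∑ i, ‖z i‖ with hSz
  -- pointwise bounds
  have hxb : ∀ i, ‖x i‖ ≤ (1 / Real.sqrt M) * Sz := by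
    intro i
    rw [hxe i]
    calc ‖∑ j, colIP A B i j * z j‖ ≤ ∑ j, ‖colIP A B i j * z j‖ := norm_sum_le _ _
      _ ≤ ∑ j, (1 / Real.sqrt M) * ‖z j‖ := by
          refine Finset.sum_le_sum fun j _ => ?_
          rw [norm_mul]
          exact mul_le_mul_of_nonneg_right (hcoh i j) (norm_nonneg _)
      _ = (1 / Real.sqrt M) * Sz := by rw [← Finset.mul_sum]
  have hzb : ∀ j, ‖z j‖ ≤ (1 / Real.sqrt M) * Sx := by
    intro j
    rw [hze j]
    calc ‖∑ i, colIP B A j i * x i‖ ≤ ∑ i, ‖colIP B A j i * x i‖ := norm_sum_le _ _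
      _ ≤ ∑ i, (1 / Real.sqrt M) * ‖x i‖ := by
          refine Finset.sum_le_sum fun i _ => ?_
          rw [norm_mul, hsym i j]
          exact mul_le_mul_of_nonneg_right (hcoh i j) (norm_nonneg _)
      _ = (1 / Real.sqrt M) * Sx := by rw [← Finset.mul_sum]
  -- sup norm bounds
  have hμnn : (0:ℝ) ≤ (1 / Real.sqrt M) * Sz :=
    mul_nonneg (by positivity) (Finset.sum_nonneg fun i _ => norm_nonneg _)
  have hμnn' : (0:ℝ) ≤ (1 / Real.sqrt M) * Sx :=
    mul_nonneg (by positivity) (Finset.sum_nonneg fun i _ => norm_nonneg _)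
  have hxnorm : ‖x‖ ≤ (1 / Real.sqrt M) * Sz :=
    (pi_norm_le_iff_of_nonneg hμnn).mpr hxb
  have hznorm : ‖z‖ ≤ (1 / Real.sqrt M) * Sx :=
    (pi_norm_le_iff_of_nonneg hμnn').mpr hzb
  have hxpos : (0:ℝ) < ‖x‖ := norm_pos_iff.mpr hx
  have hzpos : (0:ℝ) < ‖z‖ := norm_pos_iff.mpr hz
  have hSxpos : 0 < Sx := lt_of_lt_of_le hxpos (le_trans (le_of_eq rfl)
    (by
      obtain ⟨i, hi⟩ := Finset.exists_mem_eq_sup' (s := (Finset.univ : Finset (Fin M)))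
        ⟨⟨0, hM⟩, Finset.mem_univ _⟩ (fun i => ‖x i‖)
      calc ‖x‖ ≤ ∑ i, ‖x i‖ := by
            refine (pi_norm_le_iff_of_nonneg (Finset.sum_nonneg fun i _ => norm_nonneg _)).mpr ?_
            intro i
            exact Finset.single_le_sum (f := fun i => ‖x i‖) (fun i _ => norm_nonneg _)
              (Finset.mem_univ i)))
  have hSzpos : 0 < Sz := lt_of_lt_of_le hzpos
    (by
      refine (pi_norm_le_iff_of_nonneg (Finset.sum_nonneg fun i _ => norm_nonneg _)).mpr ?_
      intro i
      exact Finset.single_le_sum (f := fun i => ‖z i‖) (fun i _ => norm_nonneg _)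
        (Finset.mem_univ i))
  -- conclude
  have key : (M:ℝ) * (‖x‖ * ‖z‖) ≤ Sx * Sz := by
    have h1 : ‖x‖ * ‖z‖ ≤ ((1 / Real.sqrt M) * Sz) * ((1 / Real.sqrt M) * Sx) :=
      mul_le_mul hxnorm hznorm (le_of_lt hzpos) hμnn
    have h2 : ((1 / Real.sqrt M) * Sz) * ((1 / Real.sqrt M) * Sx) = (Sx * Sz) / M := by
      field_simp
      rw [Real.sq_sqrt hMR.le]
    rw [h2] at h1
    calc (M:ℝ) * (‖x‖ * ‖z‖) ≤ (M:ℝ) * ((Sx * Sz) / M) :=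
          mul_le_mul_of_nonneg_left h1 (le_of_lt hMR)
      _ = Sx * Sz := by field_simp
  unfold density
  rw [div_mul_div_comm]
  rw [le_div_iff₀ (by positivity)]
  exact key
end

section
/- Let A ∈ ℂ^{M×N} be a dictionary with coherence μ_A and let S ⊆ {1,…,N} satisfy μ_A(|S| − 1) < 1. Then the Gram matrix A_S^H A_S is invertible, and for every vector w ∈ ℂ^{|S|}, ‖(A_S^H A_S)^{−1} w‖₂ ≤ ‖w‖₂ / (1 − μ_A(|S| − 1)). -/
open Matrix

/-- The submatrix `A_S` of `A` consisting of the columns indexed by `S`. -/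
noncomputable def subMat {M N : ℕ} (A : Matrix (Fin M) (Fin N) ℂ) (S : Finset (Fin N)) :
    Matrix (Fin M) {i // i ∈ S} ℂ :=
  fun m i => A m i.val

/-- The Gram matrix `A_S^H A_S`. -/
noncomputable def gram {M N : ℕ} (A : Matrix (Fin M) (Fin N) ℂ) (S : Finset (Fin N)) :
    Matrix {i // i ∈ S} {i // i ∈ S} ℂ :=
  (subMat A S)ᴴ * subMat A S

/-- The orthogonal projection `P_S = A_S (A_S^H A_S)⁻¹ A_S^H` of `ℂ^M` onto the span
of the columns `{a_j : j ∈ S}` (for invertible Gram matrix `A_S^H A_S`). -/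
noncomputable def projMat {M N : ℕ} (A : Matrix (Fin M) (Fin N) ℂ) (S : Finset (Fin N)) :
    Matrix (Fin M) (Fin M) ℂ :=
  subMat A S * (gram A S)⁻¹ * (subMat A S)ᴴ

/-- The correlation `a_i^H v` between the `i`-th column of `A` and a vector `v ∈ ℂ^M`. -/
noncomputable def corr {M N : ℕ} (A : Matrix (Fin M) (Fin N) ℂ) (i : Fin N)
    (v : Fin M → ℂ) : ℂ :=
  ∑ m, (starRingEnd ℂ) (A m i) * v m

/-- The Euclidean (ℓ²) norm of a vector. -/
noncomputable def l2norm {ι : Type*} [Fintype ι] (v : ι → ℂ) : ℝ :=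
  Real.sqrt (∑ i, ‖v i‖ ^ 2)

private lemma key_sum_sq {ι : Type*} [Fintype ι] (y : ι → ℝ) (hy : ∀ i, 0 ≤ y i) :
    ∑ i, ((∑ j, y j) - y i) ^ 2 ≤ ((Fintype.card ι : ℝ) - 1) ^ 2 * ∑ i, y i ^ 2 := by
  have hT : ∀ i, y i ≤ ∑ j, y j := fun i =>
    Finset.single_le_sum (fun j _ => hy j) (Finset.mem_univ i)
  have hQle : (∑ i, y i ^ 2) ≤ (∑ j, y j) ^ 2 := by
    calc (∑ i, y i ^ 2) ≤ ∑ i, y i * (∑ j, y j) :=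
          Finset.sum_le_sum (fun i _ => by nlinarith [hy i, hT i])
      _ = (∑ j, y j) ^ 2 := by rw [← Finset.sum_mul]; ring
  have hQ0 : 0 ≤ ∑ i, y i ^ 2 := Finset.sum_nonneg fun i _ => sq_nonneg _
  have hcs : (∑ j, y j) ^ 2 ≤ (Fintype.card ι : ℝ) * ∑ i, y i ^ 2 := by
    simpa [Finset.card_univ] using
      sq_sum_le_card_mul_sum_sq (s := (Finset.univ : Finset ι)) (f := y)
  have expand : ∑ i, ((∑ j, y j) - y i) ^ 2
      = (Fintype.card ι : ℝ) * (∑ j, y j) ^ 2 - 2 * (∑ j, y j) ^ 2 + ∑ i, y i ^ 2 := by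
    have h1 : ∀ i : ι, ((∑ j, y j) - y i) ^ 2
        = (∑ j, y j) ^ 2 - 2 * (∑ j, y j) * y i + y i ^ 2 := fun i => by ring
    simp_rw [h1]
    rw [Finset.sum_add_distrib, Finset.sum_sub_distrib, Finset.sum_const, Finset.card_univ,
      nsmul_eq_mul, ← Finset.mul_sum]
    ring
  rw [expand]
  rcases Nat.lt_or_ge (Fintype.card ι) 2 with h | h
  · have h01 : Fintype.card ι = 0 ∨ Fintype.card ι = 1 := by omega
    rcases h01 with h0 | h1
    · rw [h0]; push_cast; nlinarith [sq_nonneg (∑ j, y j)]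
    · rw [h1]; push_cast; nlinarith
  · have h2 : (2 : ℝ) ≤ (Fintype.card ι : ℝ) := by exact_mod_cast h
    nlinarith [mul_le_mul_of_nonneg_left hcs (by linarith : (0:ℝ) ≤ (Fintype.card ι : ℝ) - 2)]

private lemma l2norm_eq_norm {ι : Type*} [Fintype ι] (v : ι → ℂ) :
    l2norm v = ‖(WithLp.equiv 2 (ι → ℂ)).symm v‖ := by
  rw [EuclideanSpace.norm_eq]
  simp [l2norm]

private lemma l2norm_sub_le {ι : Type*} [Fintype ι] (a b : ι → ℂ) :
    l2norm (a - b) ≤ l2norm a + l2norm b := by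
  rw [l2norm_eq_norm, l2norm_eq_norm, l2norm_eq_norm]
  exact norm_sub_le _ _

private lemma eq_zero_of_l2norm_eq_zero {ι : Type*} [Fintype ι] {v : ι → ℂ}
    (h : l2norm v = 0) : v = 0 := by
  have hsum : ∑ i, ‖v i‖ ^ 2 = 0 := by
    have h0 : 0 ≤ ∑ i, ‖v i‖ ^ 2 := Finset.sum_nonneg fun i _ => sq_nonneg _
    have := Real.sqrt_eq_zero h0 |>.mp h
    exact this
  funext i
  have := (Finset.sum_eq_zero_iff_of_nonneg (fun i _ => sq_nonneg ‖v i‖)).mp hsum i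
    (Finset.mem_univ i)
  have : ‖v i‖ = 0 := by nlinarith [norm_nonneg (v i)]
  simpa using this

theorem gram_invertible_and_inv_l2_bound {M N : ℕ} (A : Matrix (Fin M) (Fin N) ℂ) (μ : ℝ)
    (hA : UnitColumns A) (hμ : IsCoherence A μ) (S : Finset (Fin N))
    (hS : μ * ((S.card : ℝ) - 1) < 1) :
    IsUnit (gram A S) ∧
      ∀ w : {i // i ∈ S} → ℂ,
        l2norm ((gram A S)⁻¹.mulVec w) ≤ l2norm w / (1 - μ * ((S.card : ℝ) - 1)) := by
  have hμ0 : 0 ≤ μ := by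
    obtain ⟨i, j, hij, hr⟩ := hμ.1
    rw [hr]; exact norm_nonneg _
  rcases S.eq_empty_or_nonempty with rfl | hSne
  · haveI : IsEmpty {i // i ∈ (∅ : Finset (Fin N))} :=
      ⟨fun i => (Finset.notMem_empty _ i.2)⟩
    refine ⟨?_, ?_⟩
    · have h1 : gram A ∅ = 1 := Subsingleton.elim _ _
      rw [h1]; exact isUnit_one
    · intro w
      have h1 : l2norm ((gram A ∅)⁻¹.mulVec w) = 0 := by
        simp [l2norm]
      rw [h1]
      exact div_nonneg (Real.sqrt_nonneg _) (by linarith)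
  · have hs1 : 1 ≤ S.card := hSne.card_pos
    have hcard1 : (1 : ℝ) ≤ (S.card : ℝ) := by exact_mod_cast hs1
    have ht0 : 0 ≤ μ * ((S.card : ℝ) - 1) := mul_nonneg hμ0 (by linarith)
    have hGentry : ∀ i j : {i // i ∈ S}, gram A S i j = colIP A A i.val j.val := by
      intro i j
      rw [_root_.gram, Matrix.mul_apply, colIP]
      refine Finset.sum_congr rfl fun m _ => ?_
      rw [Matrix.conjTranspose_apply, subMat, subMat, starRingEnd_apply]
    have hdiag : ∀ i : {i // i ∈ S}, gram A S i i = 1 := fun i => by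
      rw [hGentry]; exact hA i.val
    have hoff : ∀ i j : {i // i ∈ S}, i ≠ j → ‖gram A S i j‖ ≤ μ := by
      intro i j hij
      rw [hGentry]
      exact hμ.2 ⟨i.val, j.val, fun h => hij (Subtype.ext h), rfl⟩
    -- key estimate
    have key : ∀ x : {i // i ∈ S} → ℂ,
        (1 - μ * ((S.card : ℝ) - 1)) * l2norm x ≤ l2norm ((gram A S).mulVec x) := by
      intro x
      have hentry : ∀ i, ‖((gram A S).mulVec x - x) i‖
          ≤ μ * ((∑ j, ‖x j‖) - ‖x i‖) := by
        intro i
        have hsplit : (gram A S).mulVec x i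
            = (∑ j ∈ Finset.univ.erase i, gram A S i j * x j) + x i := by
          rw [Matrix.mulVec, dotProduct,
            ← Finset.sum_erase_add _ _ (Finset.mem_univ i), hdiag i, one_mul]
        have heq : ((gram A S).mulVec x - x) i
            = ∑ j ∈ Finset.univ.erase i, gram A S i j * x j := by
          simp [hsplit]
        rw [heq]
        calc ‖∑ j ∈ Finset.univ.erase i, gram A S i j * x j‖
            ≤ ∑ j ∈ Finset.univ.erase i, ‖gram A S i j * x j‖ := norm_sum_le _ _
          _ ≤ ∑ j ∈ Finset.univ.erase i, μ * ‖x j‖ := by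
              refine Finset.sum_le_sum fun j hj => ?_
              rw [norm_mul]
              exact mul_le_mul_of_nonneg_right
                (hoff i j (Finset.mem_erase.mp hj).1.symm) (norm_nonneg _)
          _ = μ * ((∑ j, ‖x j‖) - ‖x i‖) := by
              rw [← Finset.mul_sum, Finset.sum_erase_eq_sub (Finset.mem_univ i)]
      have hsq : ∑ i, ‖((gram A S).mulVec x - x) i‖ ^ 2
          ≤ (μ * ((S.card : ℝ) - 1)) ^ 2 * ∑ i, ‖x i‖ ^ 2 := by
        calc ∑ i, ‖((gram A S).mulVec x - x) i‖ ^ 2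
            ≤ ∑ i, (μ * ((∑ j, ‖x j‖) - ‖x i‖)) ^ 2 := by
              refine Finset.sum_le_sum fun i _ => ?_
              exact pow_le_pow_left₀ (norm_nonneg _) (hentry i) 2
          _ = μ ^ 2 * ∑ i, ((∑ j, ‖x j‖) - ‖x i‖) ^ 2 := by
              rw [Finset.mul_sum]; exact Finset.sum_congr rfl fun i _ => by ring
          _ ≤ μ ^ 2 * (((Fintype.card {i // i ∈ S} : ℝ) - 1) ^ 2 * ∑ i, ‖x i‖ ^ 2) :=
              mul_le_mul_of_nonneg_left
                (key_sum_sq (fun i => ‖x i‖) (fun i => norm_nonneg _)) (sq_nonneg μ)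
          _ = (μ * ((S.card : ℝ) - 1)) ^ 2 * ∑ i, ‖x i‖ ^ 2 := by
              rw [Fintype.card_coe]; ring
      have hdiff : l2norm ((gram A S).mulVec x - x)
          ≤ (μ * ((S.card : ℝ) - 1)) * l2norm x := by
        rw [l2norm, l2norm]
        calc Real.sqrt (∑ i, ‖((gram A S).mulVec x - x) i‖ ^ 2)
            ≤ Real.sqrt ((μ * ((S.card : ℝ) - 1)) ^ 2 * ∑ i, ‖x i‖ ^ 2) :=
              Real.sqrt_le_sqrt hsq
          _ = (μ * ((S.card : ℝ) - 1)) * Real.sqrt (∑ i, ‖x i‖ ^ 2) := by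
              rw [Real.sqrt_mul (sq_nonneg _), Real.sqrt_sq ht0]
      have htri : l2norm x ≤ l2norm ((gram A S).mulVec x)
          + l2norm ((gram A S).mulVec x - x) := by
        have hx : x = (gram A S).mulVec x - ((gram A S).mulVec x - x) := by
          rw [sub_sub_cancel]
        calc l2norm x = l2norm ((gram A S).mulVec x - ((gram A S).mulVec x - x)) := by
              rw [← hx]
          _ ≤ _ := l2norm_sub_le _ _
      nlinarith [htri, hdiff]
    have hinj : Function.Injective (gram A S).mulVec := by
      intro x y hxy
      have h0 : (gram A S).mulVec (x - y) = 0 := by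
        rw [Matrix.mulVec_sub, hxy, sub_self]
      have hk := key (x - y)
      rw [h0] at hk
      have hL0 : l2norm (0 : {i // i ∈ S} → ℂ) = 0 := by simp [l2norm]
      rw [hL0] at hk
      have hnn : 0 ≤ l2norm (x - y) := Real.sqrt_nonneg _
      have hz : l2norm (x - y) = 0 := by nlinarith
      have := eq_zero_of_l2norm_eq_zero hz
      exact sub_eq_zero.mp this
    have hUnit : IsUnit (gram A S) := Matrix.mulVec_injective_iff_isUnit.mp hinj
    refine ⟨hUnit, fun w => ?_⟩
    have hdet : IsUnit (gram A S).det := (Matrix.isUnit_iff_isUnit_det _).mp hUnit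
    have hGx : (gram A S).mulVec ((gram A S)⁻¹.mulVec w) = w := by
      rw [Matrix.mulVec_mulVec, Matrix.mul_nonsing_inv _ hdet, Matrix.one_mulVec]
    have hk := key ((gram A S)⁻¹.mulVec w)
    rw [hGx] at hk
    rw [le_div_iff₀ (by linarith : (0:ℝ) < 1 - μ * ((S.card : ℝ) - 1))]
    linarith
end

section
/- Let A ∈ ℂ^{M×N} be a dictionary with coherence μ_A and let S ⊆ {1,…,N} satisfy μ_A(|S| − 1) < 1. Then for all indices i, k ∉ S, the orthogonal projection P_S onto the span of the columns {a_j : j ∈ S} satisfies |a_i^H P_S a_k| ≤ μ_A² |S| / (1 − μ_A(|S| − 1)). -/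
open Matrix

lemma gram_apply' {M N : ℕ} (A : Matrix (Fin M) (Fin N) ℂ) (S : Finset (Fin N))
    (j l : {i // i ∈ S}) : gram A S j l = colIP A A j.val l.val := by
  simp [_root_.gram, colIP, subMat, Matrix.mul_apply, Matrix.conjTranspose_apply]

lemma coh_nonneg {M N : ℕ} {A : Matrix (Fin M) (Fin N) ℂ} {μ : ℝ}
    (hμ : IsCoherence A μ) : 0 ≤ μ := by
  obtain ⟨_, _, _, h⟩ := hμ.1
  rw [h]; exact norm_nonneg _

lemma coh_bound {M N : ℕ} {A : Matrix (Fin M) (Fin N) ℂ} {μ : ℝ}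
    (hμ : IsCoherence A μ) {i j : Fin N} (hij : i ≠ j) : ‖colIP A A i j‖ ≤ μ :=
  hμ.2 ⟨i, j, hij, rfl⟩

lemma sup_bound {M N : ℕ} (A : Matrix (Fin M) (Fin N) ℂ) (μ : ℝ)
    (hA : UnitColumns A) (hμ : IsCoherence A μ) (S : Finset (Fin N))
    (hS : μ * ((S.card : ℝ) - 1) < 1) (hne : S.Nonempty)
    (z y : {i // i ∈ S} → ℂ) (hzy : (gram A S).mulVec z = y)
    (b : ℝ) (hy : ∀ j, ‖y j‖ ≤ b) :
    ∀ j, ‖z j‖ ≤ b / (1 - μ * ((S.card : ℝ) - 1)) := by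
  have hμ0 : 0 ≤ μ := coh_nonneg hμ
  have hc : 0 < 1 - μ * ((S.card : ℝ) - 1) := by linarith
  haveI : Nonempty {i // i ∈ S} := ⟨⟨hne.choose, hne.choose_spec⟩⟩
  obtain ⟨j₀, hj₀⟩ := Finite.exists_max (fun j : {i // i ∈ S} => ‖z j‖)
  have hcard : (Finset.univ.erase j₀).card = S.card - 1 := by
    rw [Finset.card_erase_of_mem (Finset.mem_univ _), Finset.card_univ, Fintype.card_coe]
  have hcard1 : 1 ≤ S.card := Finset.card_pos.mpr hne
  have hdiag : gram A S j₀ j₀ = 1 := by rw [gram_apply']; exact hA j₀.val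
  have hsplit : y j₀ = z j₀ + ∑ l ∈ Finset.univ.erase j₀, gram A S j₀ l * z l := by
    rw [← hzy]
    show ∑ l, gram A S j₀ l * z l = _
    rw [← Finset.add_sum_erase _ _ (Finset.mem_univ j₀), hdiag, one_mul]
  have hsum : ‖∑ l ∈ Finset.univ.erase j₀, gram A S j₀ l * z l‖
      ≤ μ * ((S.card : ℝ) - 1) * ‖z j₀‖ := by
    calc ‖∑ l ∈ Finset.univ.erase j₀, gram A S j₀ l * z l‖
        ≤ ∑ l ∈ Finset.univ.erase j₀, ‖gram A S j₀ l * z l‖ := norm_sum_le _ _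
      _ ≤ ∑ l ∈ Finset.univ.erase j₀, μ * ‖z j₀‖ := by
          apply Finset.sum_le_sum
          intro l hl
          rw [norm_mul]
          have hne' : (j₀ : Fin N) ≠ (l : Fin N) := by
            intro h
            exact (Finset.mem_erase.mp hl).1 (Subtype.ext h.symm)
          have h1 : ‖gram A S j₀ l‖ ≤ μ := by
            rw [gram_apply']; exact coh_bound hμ hne'
          exact mul_le_mul h1 (hj₀ l) (norm_nonneg _) hμ0
      _ = μ * ((S.card : ℝ) - 1) * ‖z j₀‖ := by
          rw [Finset.sum_const, hcard, nsmul_eq_mul, Nat.cast_sub hcard1]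
          push_cast; ring
  have hzj₀ : ‖z j₀‖ ≤ b + μ * ((S.card : ℝ) - 1) * ‖z j₀‖ := by
    have : z j₀ = y j₀ - ∑ l ∈ Finset.univ.erase j₀, gram A S j₀ l * z l := by
      rw [hsplit]; ring
    calc ‖z j₀‖ = ‖y j₀ - ∑ l ∈ Finset.univ.erase j₀, gram A S j₀ l * z l‖ := by rw [← this]
      _ ≤ ‖y j₀‖ + ‖∑ l ∈ Finset.univ.erase j₀, gram A S j₀ l * z l‖ := norm_sub_le _ _
      _ ≤ b + μ * ((S.card : ℝ) - 1) * ‖z j₀‖ := add_le_add (hy j₀) hsum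
  have hzb : ‖z j₀‖ ≤ b / (1 - μ * ((S.card : ℝ) - 1)) := by
    rw [le_div_iff₀ hc]; nlinarith [hzj₀]
  exact fun j => le_trans (hj₀ j) hzb

theorem proj_correlation_bound {M N : ℕ} (A : Matrix (Fin M) (Fin N) ℂ) (μ : ℝ)
    (hA : UnitColumns A) (hμ : IsCoherence A μ) (S : Finset (Fin N))
    (hS : μ * ((S.card : ℝ) - 1) < 1) :
    ∀ i k : Fin N, i ∉ S → k ∉ S →
      ‖corr A i ((projMat A S).mulVec (fun m => A m k))‖ ≤
        μ ^ 2 * (S.card : ℝ) / (1 - μ * ((S.card : ℝ) - 1)) := by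
  intro i k hi hk
  have hμ0 : 0 ≤ μ := coh_nonneg hμ
  have hc : 0 < 1 - μ * ((S.card : ℝ) - 1) := by linarith
  rcases S.eq_empty_or_nonempty with hSe | hne
  · subst hSe
    have hz : corr A i ((projMat A ∅).mulVec (fun m => A m k)) = 0 := by
      have hP : projMat A (∅ : Finset (Fin N)) = 0 := by
        ext m m'
        simp [projMat, Matrix.mul_apply]
      rw [hP]
      simp [corr]
    rw [hz, norm_zero]
    positivity
  · -- invertibility of gram
    haveI : Nonempty {x // x ∈ S} := ⟨⟨hne.choose, hne.choose_spec⟩⟩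
    have hdet : (gram A S).det ≠ 0 := by
      intro hdet0
      obtain ⟨v, hv0, hv⟩ := (Matrix.exists_mulVec_eq_zero_iff).mpr hdet0
      have := sup_bound A μ hA hμ S hS hne v 0 (by simpa using hv) 0 (by simp)
      apply hv0
      funext j
      have h := this j
      rw [zero_div] at h
      simpa using le_antisymm h (norm_nonneg _)
    set y : {x // x ∈ S} → ℂ := fun j => colIP A A j.val k with hy_def
    set z : {x // x ∈ S} → ℂ := (gram A S)⁻¹.mulVec y with hz_def
    have hzy : (gram A S).mulVec z = y := by
      rw [hz_def, Matrix.mulVec_mulVec, Matrix.mul_nonsing_inv _ (isUnit_iff_ne_zero.mpr hdet), Matrix.one_mulVec]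
    have hyb : ∀ j : {x // x ∈ S}, ‖y j‖ ≤ μ := by
      intro j
      apply coh_bound hμ
      intro h
      exact hk (h ▸ j.property)
    have hzb := sup_bound A μ hA hμ S hS hne z y hzy μ hyb
    -- rewrite the correlation
    have hrw : corr A i ((projMat A S).mulVec (fun m => A m k))
        = ∑ j : {x // x ∈ S}, colIP A A i j.val * z j := by
      have h1 : (subMat A S)ᴴ.mulVec (fun m => A m k) = y := by
        funext j
        simp [Matrix.mulVec, dotProduct, Matrix.conjTranspose_apply, subMat, hy_def, colIP]
      have h2 : (projMat A S).mulVec (fun m => A m k) = (subMat A S).mulVec z := by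
        rw [projMat, ← Matrix.mulVec_mulVec, ← Matrix.mulVec_mulVec, h1, hz_def]
      rw [h2]
      simp only [corr, Matrix.mulVec, dotProduct, subMat, colIP, Finset.mul_sum,
        Finset.sum_mul]
      rw [Finset.sum_comm]
      congr 1
      funext j
      congr 1
      funext m
      ring
    rw [hrw]
    calc ‖∑ j : {x // x ∈ S}, colIP A A i j.val * z j‖
        ≤ ∑ j : {x // x ∈ S}, ‖colIP A A i j.val * z j‖ := norm_sum_le _ _
      _ ≤ ∑ j : {x // x ∈ S}, μ * (μ / (1 - μ * ((S.card : ℝ) - 1))) := by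
          apply Finset.sum_le_sum
          intro j _
          rw [norm_mul]
          have hij : i ≠ j.val := fun h => hi (h ▸ j.property)
          exact mul_le_mul (coh_bound hμ hij) (hzb j) (norm_nonneg _) hμ0
      _ = μ ^ 2 * (S.card : ℝ) / (1 - μ * ((S.card : ℝ) - 1)) := by
          rw [Finset.sum_const, Finset.card_univ, Fintype.card_coe, nsmul_eq_mul]
          field_simp
end
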